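/- Let n ≥ 3 and p ≥ 1 be integers, and let T(i,j,k,α) (1 ≤ i,j,k ≤ n, 1 ≤ α ≤ p) be a family of real numbers that is invariant under all permutations of the indices i, j, k. Then Σ_{i,j,k,α} T(i,j,k,α)² − (1/n + 1/n²) Σ_{k,α} (Σ_i T(i,i,k,α))² ≥ (1/(3n)) Σ_{k,α} (Σ_i T(i,i,k,α))². -/

import Mathlib

open scoped BigOperators

private lemma stmt_6_aux (x : ℝ) (hx : 3 ≤ x) :
    (4 * x + 3) * (x + 2) ≤ 3 * (3 * x ^ 2) := by nlinarith

/-- `|∇h̊|² − (1/n²)|∇H|² ≥ (1/(3n))|∇H|²` in pointwise algebraic form, for `n ≥ 3`. -/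
theorem stmt_6 (n p : ℕ) (hn : 3 ≤ n) (hp : 1 ≤ p)
    (T : Fin n → Fin n → Fin n → Fin p → ℝ)
    (hsym1 : ∀ i j k α, T i j k α = T j i k α)
    (hsym2 : ∀ i j k α, T i j k α = T i k j α) :
    (1 / (3 * (n : ℝ))) * ∑ k, ∑ α, (∑ i, T i i k α) ^ 2
      ≤ (∑ i, ∑ j, ∑ k, ∑ α, (T i j k α) ^ 2)
          - (1 / (n : ℝ) + 1 / (n : ℝ) ^ 2) * ∑ k, ∑ α, (∑ i, T i i k α) ^ 2 := by
  have hn3 : (3:ℝ) ≤ (n:ℝ) := by exact_mod_cast hn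
  set v : Fin n → Fin p → ℝ := fun k α => ∑ i, T i i k α with hv
  set c : ℝ := 1 / ((n:ℝ) + 2) with hc
  set B : ℝ := ∑ k, ∑ α, (v k α) ^ 2 with hB
  set A : ℝ := ∑ i, ∑ j, ∑ k, ∑ α, (T i j k α) ^ 2 with hA
  set S : Fin n → Fin n → Fin n → Fin p → ℝ := fun i j k α =>
    (if i = j then v k α else 0) + (if j = k then v i α else 0) + (if k = i then v j α else 0)
    with hS
  have hBnn : 0 ≤ B := by positivity
  -- trace identities from symmetry
  have htr1 : ∀ i α, (∑ j, T i j j α) = v i α := by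
    intro i α
    rw [hv]
    exact Finset.sum_congr rfl fun j _ => by rw [hsym1, hsym2]
  have htr2 : ∀ j α, (∑ i, T i j i α) = v j α := by
    intro j α
    rw [hv]
    refine Finset.sum_congr rfl fun i _ => by rw [hsym2 i j i, hsym1]
  have term1 : (∑ i, ∑ j, ∑ k, ∑ α, T i j k α * (if i = j then v k α else 0)) = B := by
    simp_rw [mul_ite, mul_zero]
    have pull : ∀ (i j : Fin n),
        (∑ k, ∑ α, (if i = j then T i j k α * v k α else 0))
          = if i = j then ∑ k, ∑ α, T i j k α * v k α else 0 := by
      intro i j; split <;> simp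
    simp_rw [pull, Finset.sum_ite_eq, Finset.mem_univ, if_true]
    rw [Finset.sum_comm]
    refine Finset.sum_congr rfl fun k _ => ?_
    rw [Finset.sum_comm]
    refine Finset.sum_congr rfl fun α _ => ?_
    rw [← Finset.sum_mul]
    have hvv : (∑ i, T i i k α) = v k α := rfl
    rw [hvv]; ring
  have term2 : (∑ i, ∑ j, ∑ k, ∑ α, T i j k α * (if j = k then v i α else 0)) = B := by
    simp_rw [mul_ite, mul_zero]
    have pull : ∀ (i j k : Fin n),
        (∑ α, (if j = k then T i j k α * v i α else 0))
          = if j = k then ∑ α, T i j k α * v i α else 0 := by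
      intro i j k; split <;> simp
    simp_rw [pull, Finset.sum_ite_eq, Finset.mem_univ, if_true]
    have : ∀ i : Fin n, (∑ j, ∑ α, T i j j α * v i α) = ∑ α, (v i α)^2 := by
      intro i
      rw [Finset.sum_comm]
      refine Finset.sum_congr rfl fun α _ => ?_
      rw [← Finset.sum_mul, htr1, sq]
    simp_rw [this]
    exact hB.symm
  have term3 : (∑ i, ∑ j, ∑ k, ∑ α, T i j k α * (if k = i then v j α else 0)) = B := by
    simp_rw [mul_ite, mul_zero]
    have pull : ∀ (i j k : Fin n),
        (∑ α, (if k = i then T i j k α * v j α else 0))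
          = if k = i then ∑ α, T i j k α * v j α else 0 := by
      intro i j k; split <;> simp
    simp_rw [pull, Finset.sum_ite_eq', Finset.mem_univ, if_true]
    rw [Finset.sum_comm]
    refine Finset.sum_congr rfl fun j _ => ?_
    have : ∀ α, (∑ i, T i j i α * v j α) = (v j α)^2 := by
      intro α
      rw [← Finset.sum_mul, htr2, sq]
    rw [Finset.sum_comm]
    simp_rw [this]
  have hTS : (∑ i, ∑ j, ∑ k, ∑ α, T i j k α * S i j k α) = 3 * B := by
    have : ∀ i j k α, T i j k α * S i j k α
        = T i j k α * (if i = j then v k α else 0)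
          + T i j k α * (if j = k then v i α else 0)
          + T i j k α * (if k = i then v j α else 0) := by
      intro i j k α; rw [hS]; ring
    simp_rw [this, Finset.sum_add_distrib]
    rw [term1, term2, term3]; ring
  have pullk : ∀ (P : Prop) [inst : Decidable P] (X : Fin n → ℝ),
      (∑ k, (if P then X k else 0)) = if P then ∑ k, X k else 0 := by
    intro P inst X; split <;> simp
  have pullα : ∀ (P : Prop) [inst : Decidable P] (X : Fin p → ℝ),
      (∑ α, (if P then X α else 0)) = if P then ∑ α, X α else 0 := by
    intro P inst X; split <;> simp
  have hcard : (Finset.univ : Finset (Fin n)).card = n := by simp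
  have t1 : (∑ i : Fin n, ∑ j : Fin n, ∑ k, ∑ α, (if i = j then (v k α)^2 else 0))
      = (n : ℝ) * B := by
    simp_rw [pullα, pullk, Finset.sum_ite_eq, Finset.mem_univ, if_true]
    rw [Finset.sum_const, hcard, nsmul_eq_mul, hB]
  have t2 : (∑ i : Fin n, ∑ j : Fin n, ∑ k, ∑ α, (if j = k then (v i α)^2 else 0))
      = (n : ℝ) * B := by
    simp_rw [pullα, Finset.sum_ite_eq, Finset.mem_univ, if_true, Finset.sum_const,
      hcard, nsmul_eq_mul, ← Finset.mul_sum]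
    rw [hB]
  have t3 : (∑ i : Fin n, ∑ j : Fin n, ∑ k, ∑ α, (if k = i then (v j α)^2 else 0))
      = (n : ℝ) * B := by
    simp_rw [pullα, Finset.sum_ite_eq', Finset.mem_univ, if_true, Finset.sum_const,
      hcard, nsmul_eq_mul]
    rw [hB]
  have t4 : (∑ i : Fin n, ∑ j : Fin n, ∑ k, ∑ α,
      (if i = j then (if j = k then v k α * v i α else 0) else 0)) = B := by
    simp_rw [pullα, pullk, Finset.sum_ite_eq, Finset.mem_univ, if_true]
    rw [hB]; exact Finset.sum_congr rfl fun i _ => Finset.sum_congr rfl fun α _ => (sq _).symm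
  have t5 : (∑ i : Fin n, ∑ j : Fin n, ∑ k, ∑ α,
      (if j = k then (if k = i then v i α * v j α else 0) else 0)) = B := by
    simp_rw [pullα, Finset.sum_ite_eq, Finset.mem_univ, if_true, Finset.sum_ite_eq',
      Finset.mem_univ, if_true]
    rw [hB]; exact Finset.sum_congr rfl fun i _ => Finset.sum_congr rfl fun α _ => (sq _).symm
  have t6 : (∑ i : Fin n, ∑ j : Fin n, ∑ k, ∑ α,
      (if i = j then (if k = i then v k α * v j α else 0) else 0)) = B := by
    simp_rw [pullα, pullk, Finset.sum_ite_eq', Finset.mem_univ, if_true,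
      Finset.sum_ite_eq, Finset.mem_univ, if_true]
    rw [hB]; exact Finset.sum_congr rfl fun i _ => Finset.sum_congr rfl fun α _ => (sq _).symm
  have hSS : (∑ i, ∑ j, ∑ k, ∑ α, (S i j k α)^2) = (3 * (n:ℝ) + 6) * B := by
    have expand : ∀ i j k α, (S i j k α)^2
        = (if i = j then (v k α)^2 else 0) + (if j = k then (v i α)^2 else 0)
          + (if k = i then (v j α)^2 else 0)
          + 2 * (if i = j then (if j = k then v k α * v i α else 0) else 0)
          + 2 * (if j = k then (if k = i then v i α * v j α else 0) else 0)
          + 2 * (if i = j then (if k = i then v k α * v j α else 0) else 0) := by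
      intro i j k α; simp only [hS]; split_ifs <;> ring
    simp_rw [expand, Finset.sum_add_distrib, ← Finset.mul_sum]
    rw [t1, t2, t3, t4, t5, t6]; ring
  have hpos : (0:ℝ) ≤ ∑ i, ∑ j, ∑ k, ∑ α, (T i j k α - c * S i j k α)^2 :=
    Finset.sum_nonneg fun i _ => Finset.sum_nonneg fun j _ => Finset.sum_nonneg fun k _ =>
      Finset.sum_nonneg fun α _ => sq_nonneg _
  have hexp : (∑ i, ∑ j, ∑ k, ∑ α, (T i j k α - c * S i j k α)^2)
      = A - 2 * c * (3 * B) + c^2 * ((3 * (n:ℝ) + 6) * B) := by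
    have expand : ∀ i j k α, (T i j k α - c * S i j k α)^2
        = (T i j k α)^2 - 2 * c * (T i j k α * S i j k α) + c^2 * (S i j k α)^2 := by
      intro i j k α; ring
    simp_rw [expand, Finset.sum_add_distrib, Finset.sum_sub_distrib, ← Finset.mul_sum]
    rw [hTS, hSS, hA]
  have hkey : (6 * c - c^2 * (3 * (n:ℝ) + 6)) * B ≤ A := by
    rw [hexp] at hpos; linarith
  have h2 : (0:ℝ) < (n:ℝ) + 2 := by linarith
  have h0 : (0:ℝ) < (n:ℝ) := by linarith
  have hcoef : 1 / (3 * (n:ℝ)) + (1 / (n:ℝ) + 1 / (n:ℝ)^2)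
      ≤ 6 * c - c^2 * (3 * (n:ℝ) + 6) := by
    have e1 : 1 / (3 * (n:ℝ)) + (1 / (n:ℝ) + 1 / (n:ℝ)^2)
        = (4 * (n:ℝ) + 3) / (3 * (n:ℝ)^2) := by field_simp; ring
    have e2 : 6 * c - c^2 * (3 * (n:ℝ) + 6) = 3 / ((n:ℝ) + 2) := by
      rw [hc]; field_simp; ring
    rw [e1, e2, div_le_div_iff₀ (by positivity) (by positivity)]
    exact stmt_6_aux _ hn3
  have := mul_le_mul_of_nonneg_right hcoef hBnn
  linarith
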